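/- For any signed graph (G, σ) with n vertices, 2n − 2c(G) ≤ r(G,σ) + 2α(G), where c(G) = |E(G)| − |V(G)| + ω(G) is the cyclomatic number (ω(G) the number of connected components). -/

import Mathlib

open SimpleGraph
open scoped Classical

noncomputable section

/-- The adjacency matrix of a signed graph `(G, σ)`. -/
def sAdj {V : Type*} [Fintype V] (G : SimpleGraph V) (σ : Sym2 V → ℝ) : Matrix V V ℝ :=
  fun i j => if G.Adj i j then σ s(i, j) else 0

/-- The rank of a signed graph. -/
def srank {V : Type*} [Fintype V] (G : SimpleGraph V) (σ : Sym2 V → ℝ) : ℕ :=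
  (sAdj G σ).rank

/-- The independence number of a graph. -/
def indepNum {V : Type*} (G : SimpleGraph V) : ℕ :=
  sSup {n | ∃ s : Finset V, (∀ a ∈ s, ∀ b ∈ s, ¬ G.Adj a b) ∧ s.card = n}

/-- The matching number of a graph. -/
def matchNum {V : Type*} (G : SimpleGraph V) : ℕ :=
  sSup {n | ∃ M : G.Subgraph, M.IsMatching ∧ M.edgeSet.ncard = n}

/-- The cyclomatic number `|E| - |V| + ω` of a graph (as a natural number;
the quantity is always nonnegative). -/
def cyclomatic {V : Type*} [Fintype V] (G : SimpleGraph V) : ℕ :=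
  G.edgeSet.ncard + Nat.card G.ConnectedComponent - Fintype.card V

/-- Deleting a set of vertices from a graph: the induced subgraph on the complement. -/
def vdel {V : Type*} (G : SimpleGraph V) (S : Set V) : SimpleGraph ↥(Sᶜ) :=
  G.induce Sᶜ

/-- Restriction of a sign function to a set of vertices. -/
def σres {V : Type*} (σ : Sym2 V → ℝ) (s : Set V) : Sym2 s → ℝ :=
  fun e => σ (e.map Subtype.val)

/-- A signed graph is lower-optimal if `r + 2α = 2n - 2c`. -/
def lowerOptimal {V : Type*} [Fintype V] (G : SimpleGraph V) (σ : Sym2 V → ℝ) : Prop :=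
  srank G σ + 2 * _root_.indepNum G + 2 * cyclomatic G = 2 * Fintype.card V

/- ### Auxiliary development -/

namespace SGAux

set_option linter.unusedSectionVars false

universe u

variable {V : Type*}

/-! #### Walks and connected components -/

/-- Transfer a walk avoiding `S` to the induced subgraph on `Sᶜ`. -/
lemma reachable_induce_of_walk {G : SimpleGraph V} {S : Set V} {a b : V}
    (p : G.Walk a b) (hp : ∀ x ∈ p.support, x ∉ S) (ha : a ∈ Sᶜ) (hb : b ∈ Sᶜ) :
    (G.induce Sᶜ).Reachable ⟨a, ha⟩ ⟨b, hb⟩ := by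
  induction p with
  | nil => exact Reachable.refl _
  | @cons a c b h q ih =>
    have hc : c ∈ Sᶜ := hp c (by simp)
    have hadj : (G.induce Sᶜ).Adj ⟨a, ha⟩ ⟨c, hc⟩ := by
      simp only [comap_adj, Function.Embedding.coe_subtype]
      exact h
    exact hadj.reachable.trans (ih (fun x hx => hp x (by simp [hx])) hc hb)

/-- First exit: a walk from outside `S` into `S` passes an edge from `S` to its complement. -/
lemma exists_exit {G : SimpleGraph V} {S : Set V} {y z : V}
    (p : G.Walk y z) : y ∉ S → z ∈ S →
    ∃ w x, w ∉ S ∧ x ∈ S ∧ G.Adj x w ∧ ∃ q : G.Walk y w, ∀ t ∈ q.support, t ∉ S := by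
  induction p with
  | nil => exact fun hy hz => absurd hz hy
  | @cons y c z h q ih =>
    intro hy hz
    by_cases hc : c ∈ S
    · exact ⟨y, c, hy, hc, h.symm, Walk.nil, by simpa using hy⟩
    · obtain ⟨w, x, hw, hx, hadj, q', hq'⟩ := ih hc hz
      refine ⟨w, x, hw, hx, hadj, Walk.cons h q', ?_⟩
      intro t ht
      rcases (by simpa using ht : t = y ∨ t ∈ q'.support) with rfl | ht'
      · exact hy
      · exact hq' t ht'

/-- The map on connected components induced by inclusion. -/
def cmap {G : SimpleGraph V} {S : Set V} :
    (G.induce Sᶜ).ConnectedComponent → G.ConnectedComponent :=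
  ConnectedComponent.map (SimpleGraph.Embedding.induce Sᶜ).toHom

lemma cmap_mk {G : SimpleGraph V} {S : Set V} (y : ↥Sᶜ) :
    cmap ((G.induce Sᶜ).connectedComponentMk y) = G.connectedComponentMk ↑y := rfl

lemma cmap_inj_off {G : SimpleGraph V} {S : Set V}
    (C D : (G.induce Sᶜ).ConnectedComponent)
    (hC : ∀ s ∈ S, cmap C ≠ G.connectedComponentMk s)
    (h : cmap C = cmap D) : C = D := by
  revert hC h
  refine ConnectedComponent.ind₂ (fun y z => ?_) C D
  intro hC h
  rw [cmap_mk, cmap_mk] at h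
  obtain ⟨p⟩ := ConnectedComponent.exact h
  have hav : ∀ x ∈ p.support, x ∉ S := by
    intro x hx hxS
    exact hC x hxS (by rw [cmap_mk]; exact ConnectedComponent.sound (p.takeUntil x hx).reachable)
  exact ConnectedComponent.sound
    (by simpa using reachable_induce_of_walk p hav y.2 z.2)

lemma cmap_touch {G : SimpleGraph V} {S : Set V}
    (C : (G.induce Sᶜ).ConnectedComponent) {s₀ : V} (hs₀ : s₀ ∈ S)
    (h : cmap C = G.connectedComponentMk s₀) :
    ∃ w, ∃ hw : w ∈ Sᶜ, ∃ x ∈ S, G.Adj x w ∧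
      (G.induce Sᶜ).connectedComponentMk ⟨w, hw⟩ = C := by
  revert h
  refine ConnectedComponent.ind (fun y => ?_) C
  intro h
  rw [cmap_mk] at h
  obtain ⟨p⟩ := ConnectedComponent.exact h
  obtain ⟨w, x, hw, hx, hadj, q, hq⟩ := exists_exit p y.2 hs₀
  refine ⟨w, hw, x, hx, hadj, ?_⟩
  exact (ConnectedComponent.sound
    (by simpa using (reachable_induce_of_walk q hq y.2 hw))).symm

/-! #### Counting connected components -/

variable [Fintype V]

lemma comp_card_isolated (G : SimpleGraph V) {v : V} (hv : ∀ w, ¬ G.Adj v w) :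
    Nat.card (G.induce ({v} : Set V)ᶜ).ConnectedComponent + 1 ≤
      Nat.card G.ConnectedComponent := by
  have hnot : ∀ C : (G.induce ({v} : Set V)ᶜ).ConnectedComponent,
      cmap C ≠ G.connectedComponentMk v := by
    intro C h
    obtain ⟨w, hw, x, hx, hadj, -⟩ := cmap_touch C (Set.mem_singleton v) h
    obtain rfl : x = v := hx
    exact hv w hadj
  have hinj : Function.Injective
      (fun C : (G.induce ({v} : Set V)ᶜ).ConnectedComponent => cmap C) := by
    intro C D h
    exact cmap_inj_off C D (by rintro s rfl; exact hnot C) h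
  have hmem : G.connectedComponentMk v ∉ Set.range
      (fun C : (G.induce ({v} : Set V)ᶜ).ConnectedComponent => cmap C) := by
    rintro ⟨C, hC⟩
    exact hnot C hC
  have := Fintype.card_lt_of_injective_of_notMem _ hinj hmem
  simp only [Nat.card_eq_fintype_card]
  omega

/-- Counting components after deleting a vertex `v` lying on a "cycle". -/
lemma comp_card_cycle (G : SimpleGraph V) {v a b : V}
    (hva : G.Adj v a) (hvb : G.Adj v b) (hab : a ≠ b)
    (ha : a ∈ ({v} : Set V)ᶜ) (hb : b ∈ ({v} : Set V)ᶜ)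
    (hr : (G.induce ({v} : Set V)ᶜ).Reachable ⟨a, ha⟩ ⟨b, hb⟩) :
    Nat.card (G.induce ({v} : Set V)ᶜ).ConnectedComponent + 2 ≤
      Nat.card G.ConnectedComponent + (G.neighborSet v).ncard := by
  set S : Set V := {v} with hS
  have hchoice : ∀ C : (G.induce Sᶜ).ConnectedComponent,
      cmap C = G.connectedComponentMk v →
      ∃ w, ∃ hw : w ∈ Sᶜ, (w ∈ G.neighborSet v \ {b}) ∧
        (G.induce Sᶜ).connectedComponentMk ⟨w, hw⟩ = C := by
    intro C h
    obtain ⟨w, hw, x, hx, hadj, hc⟩ := cmap_touch C (Set.mem_singleton v) h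
    obtain rfl : x = v := hx
    by_cases hwb : w = b
    · subst hwb
      refine ⟨a, ha, ⟨hva, hab⟩, ?_⟩
      rw [← hc]
      exact ConnectedComponent.sound hr
    · exact ⟨w, hw, ⟨hadj, hwb⟩, hc⟩
  set T := ({K : G.ConnectedComponent // K ≠ G.connectedComponentMk v} ⊕
    ↥(G.neighborSet v \ {b})) with hT
  have hfun : ∀ C : (G.induce Sᶜ).ConnectedComponent, ∃ t : T,
      (∀ K hK, t = Sum.inl ⟨K, hK⟩ → cmap C = K) ∧
      (∀ w hw, t = Sum.inr ⟨w, hw⟩ → ∃ hw' : w ∈ Sᶜ,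
        (G.induce Sᶜ).connectedComponentMk ⟨w, hw'⟩ = C) := by
    intro C
    by_cases h : cmap C = G.connectedComponentMk v
    · obtain ⟨w, hw', hwmem, hwc⟩ := hchoice C h
      refine ⟨Sum.inr ⟨w, hwmem⟩, by simp, ?_⟩
      rintro w' hw'' hww
      obtain rfl : w = w' := by simpa using congrArg (Sum.elim (fun _ => w) Subtype.val) hww
      exact ⟨hw', hwc⟩
    · refine ⟨Sum.inl ⟨cmap C, h⟩, ?_, by simp⟩
      rintro K hK hKeq
      simpa using congrArg (Sum.elim Subtype.val (fun _ => cmap C)) hKeq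
  choose g hg1 hg2 using hfun
  have hginj : Function.Injective g := by
    intro C D hCD
    rcases htC : g C with ⟨K, hK⟩ | ⟨w, hw⟩
    · have h1 : cmap C = K := hg1 C K hK htC
      have h2 : cmap D = K := hg1 D K hK (hCD ▸ htC)
      exact cmap_inj_off C D
        (by intro s hs; obtain rfl : s = v := hs; rw [h1]; exact hK) (h1.trans h2.symm)
    · obtain ⟨hw1, hc1⟩ := hg2 C w hw htC
      obtain ⟨hw2, hc2⟩ := hg2 D w hw (hCD ▸ htC)
      rw [← hc1, ← hc2]
  have hcard := Nat.card_le_card_of_injective g hginj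
  rw [hT, Nat.card_sum] at hcard
  have h1 : Nat.card {K : G.ConnectedComponent // K ≠ G.connectedComponentMk v} + 1 =
      Nat.card G.ConnectedComponent := by
    have e : {K : G.ConnectedComponent // K ≠ G.connectedComponentMk v} ≃
        ↥(({G.connectedComponentMk v} : Set G.ConnectedComponent)ᶜ) :=
      Equiv.subtypeEquivRight (by intro K; simp)
    rw [Nat.card_congr e, Nat.card_coe_set_eq, Set.compl_eq_univ_diff,
      Set.ncard_diff_singleton_add_one (Set.mem_univ _), Set.ncard_univ]
  have h2 : Nat.card ↥(G.neighborSet v \ {b}) + 1 = (G.neighborSet v).ncard := by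
    rw [Nat.card_coe_set_eq,
      Set.ncard_diff_singleton_add_one (show b ∈ G.neighborSet v from hvb)]
  omega

/-- Counting components after deleting a pendant edge. -/
lemma comp_card_leaf (G : SimpleGraph V) {u v : V} (huv : G.Adj u v)
    (hleaf : ∀ w, G.Adj v w → w = u) :
    Nat.card (G.induce ({u, v} : Set V)ᶜ).ConnectedComponent + 2 ≤
      Nat.card G.ConnectedComponent + (G.neighborSet u).ncard := by
  set S : Set V := {u, v} with hS
  have huS : u ∈ S := by simp [hS]
  have hvS : v ∈ S := by simp [hS]
  have hmkuv : G.connectedComponentMk u = G.connectedComponentMk v :=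
    ConnectedComponent.sound huv.reachable
  have hchoice : ∀ C : (G.induce Sᶜ).ConnectedComponent,
      cmap C = G.connectedComponentMk u →
      ∃ w, ∃ hw : w ∈ Sᶜ, (w ∈ G.neighborSet u \ {v}) ∧
        (G.induce Sᶜ).connectedComponentMk ⟨w, hw⟩ = C := by
    intro C h
    obtain ⟨w, hw, x, hx, hadj, hc⟩ := cmap_touch C huS h
    have hwu : w ≠ u := fun hh => hw (hh ▸ huS)
    have hwv : w ≠ v := fun hh => hw (hh ▸ hvS)
    rcases (by simpa [hS] using hx : x = u ∨ x = v) with rfl | rfl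
    · exact ⟨w, hw, ⟨hadj, hwv⟩, hc⟩
    · exact absurd (hleaf w hadj) hwu
  set T := ({K : G.ConnectedComponent // K ≠ G.connectedComponentMk u} ⊕
    ↥(G.neighborSet u \ {v})) with hT
  have hfun : ∀ C : (G.induce Sᶜ).ConnectedComponent, ∃ t : T,
      (∀ K hK, t = Sum.inl ⟨K, hK⟩ → cmap C = K) ∧
      (∀ w hw, t = Sum.inr ⟨w, hw⟩ → ∃ hw' : w ∈ Sᶜ,
        (G.induce Sᶜ).connectedComponentMk ⟨w, hw'⟩ = C) := by
    intro C
    by_cases h : cmap C = G.connectedComponentMk u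
    · obtain ⟨w, hw', hwmem, hwc⟩ := hchoice C h
      refine ⟨Sum.inr ⟨w, hwmem⟩, by simp, ?_⟩
      rintro w' hw'' hww
      obtain rfl : w = w' := by simpa using congrArg (Sum.elim (fun _ => w) Subtype.val) hww
      exact ⟨hw', hwc⟩
    · refine ⟨Sum.inl ⟨cmap C, h⟩, ?_, by simp⟩
      rintro K hK hKeq
      simpa using congrArg (Sum.elim Subtype.val (fun _ => cmap C)) hKeq
  choose g hg1 hg2 using hfun
  have hginj : Function.Injective g := by
    intro C D hCD
    rcases htC : g C with ⟨K, hK⟩ | ⟨w, hw⟩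
    · have h1 : cmap C = K := hg1 C K hK htC
      have h2 : cmap D = K := hg1 D K hK (hCD ▸ htC)
      refine cmap_inj_off C D ?_ (h1.trans h2.symm)
      intro s hs
      rcases (by simpa [hS] using hs : s = u ∨ s = v) with rfl | rfl
      · rw [h1]; exact hK
      · rw [h1, ← hmkuv]; exact hK
    · obtain ⟨hw1, hc1⟩ := hg2 C w hw htC
      obtain ⟨hw2, hc2⟩ := hg2 D w hw (hCD ▸ htC)
      rw [← hc1, ← hc2]
  have hcard := Nat.card_le_card_of_injective g hginj
  rw [hT, Nat.card_sum] at hcard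
  have h1 : Nat.card {K : G.ConnectedComponent // K ≠ G.connectedComponentMk u} + 1 =
      Nat.card G.ConnectedComponent := by
    have e : {K : G.ConnectedComponent // K ≠ G.connectedComponentMk u} ≃
        ↥(({G.connectedComponentMk u} : Set G.ConnectedComponent)ᶜ) :=
      Equiv.subtypeEquivRight (by intro K; simp)
    rw [Nat.card_congr e, Nat.card_coe_set_eq, Set.compl_eq_univ_diff,
      Set.ncard_diff_singleton_add_one (Set.mem_univ _), Set.ncard_univ]
  have h2 : Nat.card ↥(G.neighborSet u \ {v}) + 1 = (G.neighborSet u).ncard := by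
    rw [Nat.card_coe_set_eq,
      Set.ncard_diff_singleton_add_one (show v ∈ G.neighborSet u from huv)]
  omega

/-! #### Counting edges -/

lemma edge_map_mem {G : SimpleGraph V} {S : Set V} {e : Sym2 ↥Sᶜ}
    (he : e ∈ (G.induce Sᶜ).edgeSet) :
    Sym2.map (Subtype.val) e ∈ G.edgeSet ∧ ∀ x ∈ Sym2.map (Subtype.val) e, x ∉ S := by
  induction e using Sym2.ind with
  | _ a b =>
    rw [mem_edgeSet] at he
    have hadj : G.Adj ↑a ↑b := by
      simpa only [comap_adj, Function.Embedding.coe_subtype] using he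
    constructor
    · rw [Sym2.map_pair_eq, mem_edgeSet]; exact hadj
    · intro x hx
      rw [Sym2.map_pair_eq, Sym2.mem_iff] at hx
      rcases hx with rfl | rfl
      · exact a.2
      · exact b.2

lemma edge_count (G : SimpleGraph V) (S : Set V) (T : Set (Sym2 V))
    (hT : ∀ e ∈ T, ∃ s ∈ S, s ∈ e) :
    (G.induce Sᶜ).edgeSet.ncard + T.ncard ≤ G.edgeSet.ncard + (T \ G.edgeSet).ncard := by
  set A : Set (Sym2 V) := Sym2.map (Subtype.val) '' (G.induce Sᶜ).edgeSet with hA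
  have hAcard : A.ncard = (G.induce Sᶜ).edgeSet.ncard :=
    Set.ncard_image_of_injective _ (Sym2.map.injective Subtype.coe_injective)
  have hdisj : Disjoint A (T ∩ G.edgeSet) := by
    rw [Set.disjoint_left]
    rintro e ⟨e', he', rfl⟩ ⟨heT, -⟩
    obtain ⟨s, hsS, hse⟩ := hT _ heT
    exact (edge_map_mem he').2 s hse hsS
  have hsub : A ∪ (T ∩ G.edgeSet) ⊆ G.edgeSet := by
    rintro e (⟨e', he', rfl⟩ | ⟨-, he⟩)
    · exact (edge_map_mem he').1
    · exact he
  have := Set.ncard_le_ncard hsub (Set.toFinite _)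
  rw [Set.ncard_union_eq hdisj (Set.toFinite _) (Set.toFinite _)] at this
  have hsplit : (T ∩ G.edgeSet).ncard + (T \ G.edgeSet).ncard = T.ncard := by
    rw [← Set.ncard_union_eq (Set.disjoint_of_subset_left Set.inter_subset_right
      Set.disjoint_sdiff_right) (Set.toFinite _) (Set.toFinite _)]
    congr 1
    rw [Set.inter_union_diff]
  omega

lemma edge_count' (G : SimpleGraph V) (S : Set V) (T : Set (Sym2 V))
    (hTE : T ⊆ G.edgeSet) (hT : ∀ e ∈ T, ∃ s ∈ S, s ∈ e) :
    (G.induce Sᶜ).edgeSet.ncard + T.ncard ≤ G.edgeSet.ncard := by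
  have := edge_count G S T hT
  rwa [Set.diff_eq_empty.mpr hTE, Set.ncard_empty, add_zero] at this

lemma ncard_incidenceSet (G : SimpleGraph V) (v : V) :
    (G.incidenceSet v).ncard = (G.neighborSet v).ncard := by
  rw [← Nat.card_coe_set_eq, ← Nat.card_coe_set_eq]
  exact Nat.card_congr (G.incidenceSetEquivNeighborSet v)

/-! #### Independence number -/

lemma indep_bddAbove (G : SimpleGraph V) :
    BddAbove {n | ∃ s : Finset V, (∀ a ∈ s, ∀ b ∈ s, ¬ G.Adj a b) ∧ s.card = n} := by
  refine ⟨Fintype.card V, ?_⟩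
  rintro n ⟨s, -, rfl⟩
  exact s.card_le_univ

lemma le_indepNum (G : SimpleGraph V) (s : Finset V)
    (h : ∀ a ∈ s, ∀ b ∈ s, ¬ G.Adj a b) : s.card ≤ _root_.indepNum G :=
  le_csSup (indep_bddAbove G) ⟨s, h, rfl⟩

lemma indepNum_exists (G : SimpleGraph V) :
    ∃ s : Finset V, (∀ a ∈ s, ∀ b ∈ s, ¬ G.Adj a b) ∧ s.card = _root_.indepNum G := by
  have hne : {n | ∃ s : Finset V, (∀ a ∈ s, ∀ b ∈ s, ¬ G.Adj a b) ∧ s.card = n}.Nonempty :=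
    ⟨0, ∅, by simp, by simp⟩
  exact Nat.sSup_mem hne (indep_bddAbove G)

/-- Push an independent set of an induced subgraph into `G`, adding a vertex `v ∈ S`
that has no neighbors outside `S`. -/
lemma indepNum_insert_le (G : SimpleGraph V) (S : Set V) (v : V) (hv : v ∈ S)
    (hnb : ∀ w ∈ Sᶜ, ¬ G.Adj v w) :
    _root_.indepNum (G.induce Sᶜ) + 1 ≤ _root_.indepNum G := by
  obtain ⟨s, hs, hcard⟩ := indepNum_exists (G.induce Sᶜ)
  set t : Finset V := s.image Subtype.val with ht
  have hvt : v ∉ t := by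
    simp only [ht, Finset.mem_image]
    rintro ⟨a, -, rfl⟩
    exact a.2 hv
  have htcard : (insert v t).card = _root_.indepNum (G.induce Sᶜ) + 1 := by
    rw [Finset.card_insert_of_notMem hvt, ht,
      Finset.card_image_of_injective _ Subtype.coe_injective, hcard]
  refine htcard ▸ le_indepNum G _ ?_
  intro a ha b hb
  simp only [Finset.mem_insert] at ha hb
  have hmem : ∀ x, x ∈ t → ∃ x' : ↥Sᶜ, x' ∈ s ∧ ↑x' = x := by
    intro x hx
    simpa [ht, Finset.mem_image] using hx
  rcases ha with rfl | ha <;> rcases hb with rfl | hb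
  · exact G.irrefl
  · obtain ⟨b', -, rfl⟩ := hmem b hb
    exact hnb _ b'.2
  · obtain ⟨a', -, rfl⟩ := hmem a ha
    intro hadj
    exact hnb _ a'.2 hadj.symm
  · obtain ⟨a', ha', rfl⟩ := hmem a ha
    obtain ⟨b', hb', rfl⟩ := hmem b hb
    intro hadj
    exact hs a' ha' b' hb' (by simpa only [comap_adj, Function.Embedding.coe_subtype] using hadj)

lemma indepNum_induce_le (G : SimpleGraph V) (S : Set V) :
    _root_.indepNum (G.induce Sᶜ) ≤ _root_.indepNum G := by
  obtain ⟨s, hs, hcard⟩ := indepNum_exists (G.induce Sᶜ)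
  have hcard' : (s.image Subtype.val).card = _root_.indepNum (G.induce Sᶜ) := by
    rw [Finset.card_image_of_injective _ Subtype.coe_injective, hcard]
  refine hcard' ▸ le_indepNum G _ ?_
  intro a ha b hb
  simp only [Finset.mem_image] at ha hb
  obtain ⟨a', ha', rfl⟩ := ha
  obtain ⟨b', hb', rfl⟩ := hb
  intro hadj
  exact hs a' ha' b' hb' (by simpa only [comap_adj, Function.Embedding.coe_subtype] using hadj)

/-! #### Rank -/

lemma rank_submatrix_le' {m n : Type*} [Fintype m] [Fintype n] [DecidableEq m]
    (A : Matrix m m ℝ) (f g : n → m) : (A.submatrix f g).rank ≤ A.rank := by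
  have h1 : (1 : Matrix m m ℝ).submatrix f (Equiv.refl m) * A = A.submatrix f id :=
    Matrix.one_submatrix_mul f (Equiv.refl m) A
  have h2 : (A.submatrix f id) * (1 : Matrix m m ℝ).submatrix (Equiv.refl m) g =
      A.submatrix f g := by
    rw [Matrix.mul_submatrix_one (Equiv.refl m) g (A.submatrix f id)]
    rfl
  calc (A.submatrix f g).rank
      = ((1 : Matrix m m ℝ).submatrix f (Equiv.refl m) * A *
        (1 : Matrix m m ℝ).submatrix (Equiv.refl m) g).rank := by rw [h1, h2]
    _ ≤ ((1 : Matrix m m ℝ).submatrix f (Equiv.refl m) * A).rank :=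
        Matrix.rank_mul_le_left _ _
    _ ≤ A.rank := Matrix.rank_mul_le_right _ _

lemma sAdj_induce (G : SimpleGraph V) (σ : Sym2 V → ℝ) (S : Set V) :
    sAdj (G.induce Sᶜ) (σres σ Sᶜ) = (sAdj G σ).submatrix Subtype.val Subtype.val := by
  ext i j
  simp only [sAdj, σres, Matrix.submatrix_apply, comap_adj, Function.Embedding.coe_subtype,
    Sym2.map_pair_eq]

lemma srank_induce_le (G : SimpleGraph V) (σ : Sym2 V → ℝ) (S : Set V) :
    srank (G.induce Sᶜ) (σres σ Sᶜ) ≤ srank G σ := by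
  rw [srank, srank, sAdj_induce]
  exact rank_submatrix_le' _ _ _

lemma hsigma_induce {G : SimpleGraph V} {σ : Sym2 V → ℝ}
    (hσ : ∀ e ∈ G.edgeSet, σ e = 1 ∨ σ e = -1) (S : Set V) :
    ∀ e ∈ (G.induce Sᶜ).edgeSet, σres σ Sᶜ e = 1 ∨ σres σ Sᶜ e = -1 := by
  intro e he
  induction e using Sym2.ind with
  | _ a b =>
    rw [mem_edgeSet] at he
    have hadj : G.Adj ↑a ↑b := by
      simpa only [comap_adj, Function.Embedding.coe_subtype] using he
    have := hσ s(↑a, ↑b) ((mem_edgeSet G).mpr hadj)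
    simpa [σres, Sym2.map_pair_eq] using this

/-- The rank decreases by exactly 2 when a pendant vertex and its neighbor are deleted;
here we only need the inequality. -/
lemma srank_pendant (G : SimpleGraph V) (σ : Sym2 V → ℝ)
    (hσ : ∀ e ∈ G.edgeSet, σ e = 1 ∨ σ e = -1) {u v : V} (huv : G.Adj u v)
    (hleaf : ∀ w, G.Adj v w → w = u) :
    srank (G.induce ({u, v} : Set V)ᶜ) (σres σ ({u, v} : Set V)ᶜ) + 2 ≤ srank G σ := by
  classical
  have hkey : srank (G.induce ({u, v} : Set V)ᶜ) (σres σ ({u, v} : Set V)ᶜ) =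
      ((sAdj G σ).submatrix (Subtype.val : ↥(({u, v} : Set V)ᶜ) → V) Subtype.val).rank :=
    congrArg Matrix.rank (sAdj_induce G σ {u, v})
  rw [hkey, srank]
  set S : Set V := {u, v} with hS
  set A : Matrix V V ℝ := sAdj G σ with hA
  set B : Matrix ↥Sᶜ ↥Sᶜ ℝ := A.submatrix Subtype.val Subtype.val with hB
  have hne : u ≠ v := huv.ne
  have hAuv : A u v ≠ 0 := by
    have hmem : s(u, v) ∈ G.edgeSet := (mem_edgeSet G).mpr huv
    have : A u v = σ s(u, v) := by simp [hA, sAdj, huv]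
    rcases hσ _ hmem with h | h <;> rw [this, h] <;> norm_num
  have hAv : ∀ w, w ≠ u → A v w = 0 := by
    intro w hw
    have : ¬ G.Adj v w := fun h => hw (hleaf w h)
    simp [hA, sAdj, this]
  have hAv' : ∀ w, w ≠ u → A w v = 0 := by
    intro w hw
    have : ¬ G.Adj w v := fun h => hw (hleaf w h.symm)
    simp [hA, sAdj, this]
  set R : Submodule ℝ (V → ℝ) := LinearMap.range A.mulVecLin with hR
  set Ψ : (V → ℝ) →ₗ[ℝ] (↥Sᶜ → ℝ) × ℝ :=
    LinearMap.prod (LinearMap.funLeft ℝ ℝ (Subtype.val : ↥Sᶜ → V))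
      (LinearMap.proj v) with hΨ
  set f : R →ₗ[ℝ] (↥Sᶜ → ℝ) × ℝ := Ψ.comp R.subtype with hf
  have hrank_eq : A.rank = Module.finrank ℝ (LinearMap.range f) +
      Module.finrank ℝ (LinearMap.ker f) := by
    rw [Matrix.rank, ← LinearMap.finrank_range_add_finrank_ker f]
  have hker : 1 ≤ Module.finrank ℝ (LinearMap.ker f) := by
    set κ : V → ℝ := A.mulVec (Pi.single v 1) with hκ
    have hκR : κ ∈ R := ⟨Pi.single v 1, rfl⟩
    have hκval : κ = fun i => A i v * 1 := by rw [hκ, Matrix.mulVec_single_one]; funext i; simp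
    have hκmem : (⟨κ, hκR⟩ : R) ∈ LinearMap.ker f := by
      rw [LinearMap.mem_ker]
      apply Prod.ext
      · funext w
        have : (↑w : V) ≠ u := by
          intro h
          exact w.2 (by rw [h]; exact Set.mem_insert _ _)
        simp [hf, hΨ, hκval, LinearMap.funLeft, hAv' _ this]
      · have hvu : v ≠ u := hne.symm
        simp [hf, hΨ, hκval, hAv' v hvu]
    have hκne : (⟨κ, hκR⟩ : R) ≠ 0 := by
      intro h
      have h0 : κ u = 0 := by
        rw [show κ = 0 from congrArg Subtype.val h]; rfl
      rw [hκval] at h0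
      simp only [mul_one] at h0
      exact hAuv h0
    rw [Nat.one_le_iff_ne_zero]
    intro h0
    rw [Submodule.finrank_eq_zero] at h0
    have : (⟨κ, hκR⟩ : R) ∈ (⊥ : Submodule ℝ R) := h0 ▸ hκmem
    exact hκne (by simpa using this)
  have hAvu : A v u ≠ 0 := by
    have hmem : s(v, u) ∈ G.edgeSet := (mem_edgeSet G).mpr huv.symm
    have h1 : A v u = σ s(v, u) := by simp [hA, sAdj, huv.symm]
    rcases hσ _ hmem with h | h <;> rw [h1, h] <;> norm_num
  have hrange : B.rank + 1 ≤ Module.finrank ℝ (LinearMap.range f) := by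
    have hrangef : LinearMap.range f = Submodule.map Ψ R := by
      rw [hf, LinearMap.range_comp, Submodule.range_subtype]
    set X : Submodule ℝ ((↥Sᶜ → ℝ) × ℝ) :=
      Submodule.map (LinearMap.inl ℝ (↥Sᶜ → ℝ) ℝ) (LinearMap.range B.mulVecLin) with hX
    have hXrank : Module.finrank ℝ X = B.rank := by
      rw [hX, Matrix.rank]
      exact (Submodule.equivMapOfInjective _ LinearMap.inl_injective _).finrank_eq.symm
    have hXle : X ≤ Submodule.map Ψ R := by
      rintro z hz
      rw [hX] at hz
      obtain ⟨y, ⟨x, rfl⟩, rfl⟩ := hz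
      set x' : V → ℝ := fun i => if h : i ∈ Sᶜ then x ⟨i, h⟩ else 0 with hx'
      refine ⟨A.mulVec x', ⟨x', rfl⟩, ?_⟩
      have hmv : ∀ c : V, A.mulVec x' c = ∑ j : ↥Sᶜ, A c ↑j * x j := by
        intro c
        rw [Matrix.mulVec, dotProduct,
          ← Finset.sum_filter_add_sum_filter_not Finset.univ (· ∈ Sᶜ)]
        have h2 : ∑ i ∈ Finset.univ.filter (fun i => ¬ i ∈ Sᶜ), A c i * x' i = 0 := by
          refine Finset.sum_eq_zero fun i hi => ?_
          rw [Finset.mem_filter] at hi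
          have hz : x' i = 0 := dif_neg hi.2
          rw [hz, mul_zero]
        rw [h2, add_zero,
          Finset.sum_subtype (p := fun i => i ∈ Sᶜ) (Finset.univ.filter (fun i => i ∈ Sᶜ))
            (by intro x; simp) (fun i => A c i * x' i)]
        refine Finset.sum_congr rfl fun j _ => ?_
        have hz : x' ↑j = x j := by
          rw [hx']
          exact dif_pos j.2
        rw [hz]
      have hΨval : Ψ (A.mulVec x') = (B.mulVec x, 0) := by
        rw [hΨ]
        apply Prod.ext
        · funext w
          have h1 : (LinearMap.prod (LinearMap.funLeft ℝ ℝ (Subtype.val : ↥Sᶜ → V))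
              (LinearMap.proj v) (A.mulVec x')).1 w = A.mulVec x' ↑w := rfl
          rw [h1, hmv]
          rfl
        · have h1 : (LinearMap.prod (LinearMap.funLeft ℝ ℝ (Subtype.val : ↥Sᶜ → V))
              (LinearMap.proj v) (A.mulVec x')).2 = A.mulVec x' v := rfl
          rw [h1, hmv]
          refine Finset.sum_eq_zero fun j _ => ?_
          have hju : (↑j : V) ≠ u := fun h => j.2 (by rw [h]; exact Set.mem_insert _ _)
          rw [hAv _ hju, zero_mul]
      rw [hΨval]
      rfl
    set q : (↥Sᶜ → ℝ) × ℝ := Ψ (A.mulVec (Pi.single u 1)) with hq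
    have hqmem : q ∈ Submodule.map Ψ R := ⟨A.mulVec (Pi.single u 1), ⟨Pi.single u 1, rfl⟩, rfl⟩
    have hqsnd : q.2 = A v u := by
      rw [hq, hΨ]
      have h1 : (LinearMap.prod (LinearMap.funLeft ℝ ℝ (Subtype.val : ↥Sᶜ → V))
          (LinearMap.proj v) (A.mulVec (Pi.single u 1))).2 = A.mulVec (Pi.single u 1) v := rfl
      rw [h1, Matrix.mulVec_single_one]
      rfl
    have hqX : q ∉ X := by
      intro hmem
      rw [hX] at hmem
      obtain ⟨y, -, heq⟩ := hmem
      have h0 : q.2 = 0 := by rw [← heq]; rfl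
      rw [hqsnd] at h0
      exact hAvu h0
    have hlt : X < Submodule.map Ψ R := lt_of_le_of_ne hXle (fun h => hqX (h ▸ hqmem))
    have := Submodule.finrank_lt_finrank_of_lt hlt
    rw [hrangef]
    omega
  omega

/-! #### Existence of a vertex on a cycle -/

lemma exists_cycle_vertex (G : SimpleGraph V) (hne : Nonempty V)
    (hdeg : ∀ x : V, ∃ w₁ w₂, w₁ ≠ w₂ ∧ G.Adj x w₁ ∧ G.Adj x w₂) :
    ∃ (y a c : V), a ≠ c ∧ G.Adj y a ∧ G.Adj y c ∧
      ∃ (ha : a ∈ ({y} : Set V)ᶜ) (hc : c ∈ ({y} : Set V)ᶜ),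
        (G.induce ({y} : Set V)ᶜ).Reachable ⟨a, ha⟩ ⟨c, hc⟩ := by
  classical
  obtain ⟨v₀⟩ := hne
  set M : Set ℕ := {n | ∃ (x y : V) (p : G.Walk x y), p.IsPath ∧ p.length = n} with hM
  have hM0 : (0 : ℕ) ∈ M := ⟨v₀, v₀, Walk.nil, Walk.IsPath.nil, rfl⟩
  have hbdd : BddAbove M := by
    refine ⟨Fintype.card V, ?_⟩
    rintro m ⟨x, y, p, hp, rfl⟩
    exact hp.length_lt.le
  obtain ⟨x, y, p, hp, hlen⟩ := Nat.sSup_mem ⟨0, hM0⟩ hbdd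
  have hext : ∀ w, G.Adj y w → w ∈ p.support := by
    intro w hw
    by_contra hns
    have hmem : p.length + 1 ∈ M := by
      refine ⟨w, x, Walk.cons hw.symm p.reverse, ?_, by simp⟩
      rw [Walk.cons_isPath_iff]
      exact ⟨hp.reverse, by rwa [Walk.support_reverse, List.mem_reverse]⟩
    have := le_csSup hbdd hmem
    omega
  obtain ⟨w₁, w₂, hw12, h1, h2⟩ := hdeg y
  have h1s := hext w₁ h1
  have h2s := hext w₂ h2
  have hplen : p.length ≠ 0 := by
    intro h0
    have hxy : x = y := p.eq_of_length_eq_zero h0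
    subst hxy
    have hsupp : p.support = [x] := by
      cases p with
      | nil => rfl
      | cons h q => simp at h0
    rw [hsupp] at h1s
    simp at h1s
    exact h1.ne' h1s
  cases hpr : p.reverse with
  | nil =>
    exfalso
    have : p.reverse.length = 0 := by rw [hpr]; rfl
    rw [Walk.length_reverse] at this
    exact hplen this
  | @cons _ z _ h q =>
    have hrp : (Walk.cons h q).IsPath := hpr ▸ hp.reverse
    rw [Walk.cons_isPath_iff] at hrp
    obtain ⟨hq, hyq⟩ := hrp
    set c : V := if w₁ = z then w₂ else w₁ with hc
    have hcz : c ≠ z := by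
      rw [hc]; split
      · rename_i hh; rw [← hh]; exact hw12.symm
      · assumption
    have hcadj : G.Adj y c := by
      rw [hc]; split
      · exact h2
      · exact h1
    have hcs : c ∈ p.support := hext c hcadj
    have hcq : c ∈ q.support := by
      have : c ∈ p.reverse.support := by
        rw [Walk.support_reverse, List.mem_reverse]; exact hcs
      rw [hpr, Walk.support_cons] at this
      rcases List.mem_cons.mp this with h' | h'
      · exact absurd h' hcadj.ne'
      · exact h'
    have hzy : z ∈ ({y} : Set V)ᶜ := by simpa using h.ne'
    have hcy : c ∈ ({y} : Set V)ᶜ := by simpa using hcadj.ne'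
    refine ⟨y, z, c, hcz.symm, h, hcadj, hzy, hcy, ?_⟩
    refine reachable_induce_of_walk (q.takeUntil c hcq) ?_ hzy hcy
    intro t ht hty
    have : t ∈ q.support := Walk.support_takeUntil_subset _ hcq ht
    rw [show t = y from hty] at this
    exact hyq this

/-! #### Cardinalities of complements -/

lemma card_compl_singleton (v : V) :
    Fintype.card ↥(({v} : Set V)ᶜ) + 1 = Fintype.card V := by
  have h := Set.ncard_add_ncard_compl ({v} : Set V)
  rw [Set.ncard_singleton] at h
  have h1 : Nat.card ↥(({v} : Set V)ᶜ) = Fintype.card ↥(({v} : Set V)ᶜ) :=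
    Nat.card_eq_fintype_card
  have h2 : Nat.card V = Fintype.card V := Nat.card_eq_fintype_card
  have h3 := Nat.card_coe_set_eq (({v} : Set V)ᶜ)
  omega

lemma card_compl_pair {u v : V} (huv : u ≠ v) :
    Fintype.card ↥(({u, v} : Set V)ᶜ) + 2 = Fintype.card V := by
  have h := Set.ncard_add_ncard_compl ({u, v} : Set V)
  rw [Set.ncard_pair huv] at h
  have h1 : Nat.card ↥(({u, v} : Set V)ᶜ) = Fintype.card ↥(({u, v} : Set V)ᶜ) :=
    Nat.card_eq_fintype_card
  have h2 : Nat.card V = Fintype.card V := Nat.card_eq_fintype_card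
  have h3 := Nat.card_coe_set_eq (({u, v} : Set V)ᶜ)
  omega

end SGAux

/-- The key inequality, proved by strong induction on the number of vertices:
`4n ≤ r + 2α + 2(|E| + ω)`. -/
lemma sg_master : ∀ (n : ℕ) (V : Type u) [Fintype V] (G : SimpleGraph V) (σ : Sym2 V → ℝ),
    (∀ e ∈ G.edgeSet, σ e = 1 ∨ σ e = -1) → Fintype.card V ≤ n →
    4 * Fintype.card V ≤
      srank G σ + 2 * _root_.indepNum G +
        2 * (G.edgeSet.ncard + Nat.card G.ConnectedComponent) := by
  intro n
  induction n with
  | zero =>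
    intro V _ G σ hσ hc
    omega
  | succ n ih =>
    intro V _ G σ hσ hc
    by_cases hle : Fintype.card V ≤ n
    · exact ih V G σ hσ hle
    have hcard : Fintype.card V = n + 1 := by omega
    have hVne : Nonempty V := Fintype.card_pos_iff.mp (by omega)
    by_cases hiso : ∃ v, ∀ w, ¬ G.Adj v w
    · -- Case A : isolated vertex
      obtain ⟨v, hv⟩ := hiso
      have hcompl := SGAux.card_compl_singleton (V := V) v
      have hIH := ih ↥(({v} : Set V)ᶜ) (G.induce ({v} : Set V)ᶜ)
        (σres σ ({v} : Set V)ᶜ) (SGAux.hsigma_induce hσ {v}) (by omega)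
      have h1 : srank (G.induce ({v} : Set V)ᶜ) (σres σ ({v} : Set V)ᶜ) ≤ srank G σ := by
        convert SGAux.srank_induce_le G σ ({v} : Set V)
      have h2 := SGAux.indepNum_insert_le G ({v} : Set V) v (Set.mem_singleton v)
        (fun w _ => hv w)
      have h3 : (G.induce ({v} : Set V)ᶜ).edgeSet.ncard ≤ G.edgeSet.ncard := by
        have := SGAux.edge_count' G ({v} : Set V) ∅ (Set.empty_subset _) (by simp)
        simpa using this
      have h4 := SGAux.comp_card_isolated G hv
      omega
    by_cases hpend : ∃ v u, G.Adj v u ∧ ∀ w, G.Adj v w → w = u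
    · -- Case B : pendant vertex
      obtain ⟨v, u, hvu, hlf⟩ := hpend
      have huv : G.Adj u v := hvu.symm
      have hune : u ≠ v := huv.ne
      have hcompl := SGAux.card_compl_pair (V := V) hune
      have hIH := ih ↥(({u, v} : Set V)ᶜ) (G.induce ({u, v} : Set V)ᶜ)
        (σres σ ({u, v} : Set V)ᶜ) (SGAux.hsigma_induce hσ {u, v}) (by omega)
      have h1 := SGAux.srank_pendant G σ hσ huv hlf
      have h2 : _root_.indepNum (G.induce ({u, v} : Set V)ᶜ) + 1 ≤ _root_.indepNum G := by
        refine SGAux.indepNum_insert_le G ({u, v} : Set V) v (by simp) ?_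
        intro w hw hadj
        exact hw (by rw [hlf w hadj]; exact Set.mem_insert _ _)
      have h3 : (G.induce ({u, v} : Set V)ᶜ).edgeSet.ncard + (G.neighborSet u).ncard ≤
          G.edgeSet.ncard := by
        have := SGAux.edge_count' G ({u, v} : Set V) (G.incidenceSet u)
          (G.incidenceSet_subset u) (fun e he => ⟨u, Set.mem_insert _ _, he.2⟩)
        rwa [SGAux.ncard_incidenceSet] at this
      have h4 := SGAux.comp_card_leaf G huv hlf
      omega
    · -- Case C : minimum degree at least two
      have hdeg : ∀ x : V, ∃ w₁ w₂, w₁ ≠ w₂ ∧ G.Adj x w₁ ∧ G.Adj x w₂ := by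
        intro x
        push_neg at hiso hpend
        obtain ⟨w, hw⟩ := hiso x
        obtain ⟨w', hw', hwne⟩ := hpend x w hw
        exact ⟨w', w, hwne, hw', hw⟩
      obtain ⟨y, a, c, hac, hya, hyc, ha, hc, hreach⟩ :=
        SGAux.exists_cycle_vertex G hVne hdeg
      have hcompl := SGAux.card_compl_singleton (V := V) y
      have hIH := ih ↥(({y} : Set V)ᶜ) (G.induce ({y} : Set V)ᶜ)
        (σres σ ({y} : Set V)ᶜ) (SGAux.hsigma_induce hσ {y}) (by omega)
      have h1 : srank (G.induce ({y} : Set V)ᶜ) (σres σ ({y} : Set V)ᶜ) ≤ srank G σ := by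
        convert SGAux.srank_induce_le G σ ({y} : Set V)
      have h2 := SGAux.indepNum_induce_le G ({y} : Set V)
      have h3 : (G.induce ({y} : Set V)ᶜ).edgeSet.ncard + (G.neighborSet y).ncard ≤
          G.edgeSet.ncard := by
        have := SGAux.edge_count' G ({y} : Set V) (G.incidenceSet y)
          (G.incidenceSet_subset y) (fun e he => ⟨y, Set.mem_singleton _, he.2⟩)
        rwa [SGAux.ncard_incidenceSet] at this
      have h4 := SGAux.comp_card_cycle G hya hyc hac ha hc hreach
      omega

theorem two_card_sub_cyclomatic_le {V : Type*} [Fintype V] (G : SimpleGraph V)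
    (σ : Sym2 V → ℝ) (hσ : ∀ e ∈ G.edgeSet, σ e = 1 ∨ σ e = -1) :
    2 * Fintype.card V - 2 * cyclomatic G ≤ srank G σ + 2 * _root_.indepNum G := by
  have h := sg_master (Fintype.card V) V G σ hσ le_rfl
  have hcyc : cyclomatic G =
      G.edgeSet.ncard + Nat.card G.ConnectedComponent - Fintype.card V := rfl
  omega
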